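/- Let e₁ and e₂ be integers with e₂ > e₁ ≥ 0, and define σ : SL(2,k) → SL(4,k) by σ(A) = A^{(p^{e₂})} ⊗ A^{(p^{e₁})}. Then σ is a group homomorphism; moreover the only column vector v ∈ k⁴ with σ(A)·v = v for all A ∈ SL(2,k) is v = 0, and the only row vector w ∈ k⁴ with w·σ(A) = w for all A ∈ SL(2,k) is w = 0. -/

import Mathlib

open Matrix Polynomial

/-- Entrywise `m`-th power of a 2×2 matrix: `A^{(m)} = [[a^m, b^m],[c^m, d^m]]`. -/
noncomputable def entryPow {k : Type*} [Field k] (A : Matrix (Fin 2) (Fin 2) k) (m : ℕ) :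
    Matrix (Fin 2) (Fin 2) k :=
  Matrix.of fun i j => A i j ^ m

/-- The Kronecker product of two 2×2 matrices, written as a 4×4 matrix in 2×2 blocks
`[[x₁₁·Y, x₁₂·Y],[x₂₁·Y, x₂₂·Y]]`. -/
noncomputable def kron4 {k : Type*} [Field k] (X Y : Matrix (Fin 2) (Fin 2) k) :
    Matrix (Fin 4) (Fin 4) k :=
  !![X 0 0 * Y 0 0, X 0 0 * Y 0 1, X 0 1 * Y 0 0, X 0 1 * Y 0 1;
     X 0 0 * Y 1 0, X 0 0 * Y 1 1, X 0 1 * Y 1 0, X 0 1 * Y 1 1;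
     X 1 0 * Y 0 0, X 1 0 * Y 0 1, X 1 1 * Y 0 0, X 1 1 * Y 0 1;
     X 1 0 * Y 1 0, X 1 0 * Y 1 1, X 1 1 * Y 1 0, X 1 1 * Y 1 1]

lemma entryPow_mul {k : Type*} [Field k] {p : ℕ} [Fact p.Prime] [CharP k p]
    (A B : Matrix (Fin 2) (Fin 2) k) (e : ℕ) :
    entryPow (A * B) (p ^ e) = entryPow A (p ^ e) * entryPow B (p ^ e) := by
  ext i j
  simp [entryPow, Matrix.mul_apply, Fin.sum_univ_two, add_pow_char_pow, mul_pow]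

lemma kron4_mul {k : Type*} [Field k] (X₁ X₂ Y₁ Y₂ : Matrix (Fin 2) (Fin 2) k) :
    kron4 (X₁ * X₂) (Y₁ * Y₂) = kron4 X₁ Y₁ * kron4 X₂ Y₂ := by
  ext i j
  fin_cases i <;> fin_cases j <;>
    simp [kron4, Matrix.mul_apply, Fin.sum_univ_four, Fin.sum_univ_two] <;> ring

lemma kron4_det {k : Type*} [Field k] (X Y : Matrix (Fin 2) (Fin 2) k) :
    (kron4 X Y).det = X.det ^ 2 * Y.det ^ 2 := by
  simp [kron4, Matrix.det_succ_row_zero, Fin.sum_univ_succ, Matrix.det_fin_two, Fin.succAbove]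
  ring

lemma entryPow_det {k : Type*} [Field k] {p : ℕ} [Fact p.Prime] [CharP k p]
    (A : Matrix (Fin 2) (Fin 2) k) (e : ℕ) :
    (entryPow A (p ^ e)).det = A.det ^ (p ^ e) := by
  simp [entryPow, Matrix.det_fin_two, ← mul_pow, ← sub_pow_char_pow]

lemma exists_pow_ne_one (k : Type*) [Field k] [Infinite k] {N : ℕ} (hN : 0 < N) :
    ∃ t : k, t ^ N ≠ 1 := by
  have hfin : Set.Finite {x : k | (X ^ N - C 1 : k[X]).IsRoot x} :=
    Polynomial.finite_setOf_isRoot (Polynomial.X_pow_sub_C_ne_zero hN 1)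
  obtain ⟨t, ht⟩ := hfin.infinite_compl.nonempty
  refine ⟨t, fun h => ht ?_⟩
  simp [Polynomial.IsRoot, h]

lemma eq_zero_of_mul_self {k : Type*} [Field k] {a x : k} (h : a * x = x) (ha : a ≠ 1) :
    x = 0 := by
  have : (a - 1) * x = 0 := by ring_nf; linear_combination h
  rcases mul_eq_zero.mp this with h' | h'
  · exact (ha (sub_eq_zero.mp h')).elim
  · exact h'

lemma exists_ne_zero_pow_ne_one (k : Type*) [Field k] [Infinite k] {N : ℕ} (hN : 0 < N) :
    ∃ t : k, t ≠ 0 ∧ t ^ N ≠ 1 := by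
  have hfin : Set.Finite ({x : k | (X ^ N - C 1 : k[X]).IsRoot x} ∪ {0}) :=
    (Polynomial.finite_setOf_isRoot (Polynomial.X_pow_sub_C_ne_zero hN 1)).union
      (Set.finite_singleton 0)
  obtain ⟨t, ht⟩ := hfin.infinite_compl.nonempty
  simp only [Set.mem_compl_iff, Set.mem_union, Set.mem_setOf_eq, Set.mem_singleton_iff,
    not_or] at ht
  refine ⟨t, ht.2, fun h => ht.1 ?_⟩
  simp [Polynomial.IsRoot, h]

lemma coeffs_ne_one {k : Type*} [Field k] {q₁ q₂ : ℕ} (hq : q₁ < q₂) {t : k}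
    (ht0 : t ≠ 0) (tN : t ^ ((q₂ + q₁) * (q₂ - q₁)) ≠ 1) :
    t ^ q₂ * t ^ q₁ ≠ 1 ∧ t ^ q₂ * (t⁻¹) ^ q₁ ≠ 1 ∧ (t⁻¹) ^ q₂ * t ^ q₁ ≠ 1 ∧
      (t⁻¹) ^ q₂ * (t⁻¹) ^ q₁ ≠ 1 := by
  have h1 : t ^ (q₂ + q₁) ≠ 1 := fun hh => tN (by rw [pow_mul, hh, one_pow])
  have h2 : t ^ q₂ ≠ t ^ q₁ := by
    intro hh
    have hsub : t ^ (q₂ - q₁) = 1 := by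
      have : t ^ (q₂ - q₁) * t ^ q₁ = t ^ q₁ := by
        rw [← pow_add, Nat.sub_add_cancel hq.le, hh]
      exact mul_right_cancel₀ (pow_ne_zero _ ht0) (by rw [this, one_mul])
    exact tN (by rw [mul_comm, pow_mul, hsub, one_pow])
  refine ⟨?_, ?_, ?_, ?_⟩
  · rw [← pow_add]; exact h1
  · intro hh; apply h2; rw [inv_pow, ← div_eq_mul_inv, div_eq_one_iff_eq (pow_ne_zero _ ht0)] at hh; exact hh
  · intro hh; apply h2; rw [inv_pow, inv_mul_eq_one₀ (pow_ne_zero _ ht0)] at hh; exact hh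
  · rw [inv_pow, inv_pow, ← mul_inv, ← pow_add]
    intro hh; exact h1 (inv_eq_one.mp hh)

/-- For `e₂ > e₁ ≥ 0`, the map `σ(A) = A^{(p^{e₂})} ⊗ A^{(p^{e₁})}`
takes values in `SL(4,k)`, is a group homomorphism, and has no nonzero fixed column
vectors and no nonzero fixed row vectors. -/
theorem stmt11 {k : Type*} [Field k] [IsAlgClosed k] {p : ℕ} [Fact p.Prime] [CharP k p]
    (e₁ e₂ : ℕ) (h : e₁ < e₂) :
    (∀ A : SpecialLinearGroup (Fin 2) k,
        (kron4 (entryPow A.1 (p ^ e₂)) (entryPow A.1 (p ^ e₁))).det = 1) ∧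
      (∀ A B : SpecialLinearGroup (Fin 2) k,
        kron4 (entryPow (A * B).1 (p ^ e₂)) (entryPow (A * B).1 (p ^ e₁)) =
          kron4 (entryPow A.1 (p ^ e₂)) (entryPow A.1 (p ^ e₁)) *
            kron4 (entryPow B.1 (p ^ e₂)) (entryPow B.1 (p ^ e₁))) ∧
      (∀ v : Fin 4 → k,
        (∀ A : SpecialLinearGroup (Fin 2) k,
          kron4 (entryPow A.1 (p ^ e₂)) (entryPow A.1 (p ^ e₁)) *ᵥ v = v) → v = 0) ∧
      ∀ w : Fin 4 → k,
        (∀ A : SpecialLinearGroup (Fin 2) k,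
          w ᵥ* kron4 (entryPow A.1 (p ^ e₂)) (entryPow A.1 (p ^ e₁)) = w) → w = 0 := by
  have hp1 : 1 < p := (Fact.out : p.Prime).one_lt
  have hq : p ^ e₁ < p ^ e₂ := Nat.pow_lt_pow_right hp1 h
  have hq₁ : 0 < p ^ e₁ := Nat.pow_pos (by omega)
  have hq₂ : 0 < p ^ e₂ := Nat.pow_pos (by omega)
  have hN : 0 < (p ^ e₂ + p ^ e₁) * (p ^ e₂ - p ^ e₁) := by
    apply Nat.mul_pos <;> omega
  obtain ⟨t, ht0, tN⟩ := exists_ne_zero_pow_ne_one k hN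
  obtain ⟨c0, c1, c2, c3⟩ := coeffs_ne_one hq ht0 tN
  have hdet : (!![t, 0; 0, t⁻¹] : Matrix (Fin 2) (Fin 2) k).det = 1 := by
    simp [Matrix.det_fin_two_of, mul_inv_cancel₀ ht0]
  set M : SpecialLinearGroup (Fin 2) k := ⟨!![t, 0; 0, t⁻¹], hdet⟩ with hM
  refine ⟨?_, ?_, ?_, ?_⟩
  · intro A
    rw [kron4_det, entryPow_det, entryPow_det, A.2]; norm_num
  · intro A B
    rw [show (A * B).1 = A.1 * B.1 from rfl, entryPow_mul, entryPow_mul, kron4_mul]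
  · intro v hv
    have hv' := hv M
    have e0 := congrFun hv' 0
    have e1 := congrFun hv' 1
    have e2 := congrFun hv' 2
    have e3 := congrFun hv' 3
    simp [kron4, entryPow, Matrix.mulVec, dotProduct, Fin.sum_univ_four, hM,
      zero_pow hq₁.ne', zero_pow hq₂.ne'] at e0 e1 e2 e3
    simp only [inv_pow] at c1 c2 c3
    have z0 : v 0 = 0 := eq_zero_of_mul_self e0 c0
    have z1 : v 1 = 0 := eq_zero_of_mul_self e1 c1
    have z2 : v 2 = 0 := eq_zero_of_mul_self e2 c2
    have z3 : v 3 = 0 := eq_zero_of_mul_self e3 c3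
    funext i; fin_cases i <;> simp [z0, z1, z2, z3]
  · intro w hw
    have hw' := hw M
    have e0 := congrFun hw' 0
    have e1 := congrFun hw' 1
    have e2 := congrFun hw' 2
    have e3 := congrFun hw' 3
    simp [kron4, entryPow, Matrix.vecMul, dotProduct, Fin.sum_univ_four, hM,
      Matrix.vecHead, Matrix.vecTail, zero_pow hq₁.ne', zero_pow hq₂.ne'] at e0 e1 e2 e3
    simp only [inv_pow] at c1 c2 c3
    rw [mul_comm] at e0 e1 e2 e3
    have z0 : w 0 = 0 := eq_zero_of_mul_self e0 c0
    have z1 : w 1 = 0 := eq_zero_of_mul_self e1 c1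
    have z2 : w 2 = 0 := eq_zero_of_mul_self e2 c2
    have z3 : w 3 = 0 := eq_zero_of_mul_self e3 c3
    funext i; fin_cases i <;> simp [z0, z1, z2, z3]
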